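/- arXiv:2311.04010 — 2 statements merged into one kernel-verified Lean document; each statement's English description precedes it below -/
import Mathlib

section
/- Let F₃ be the free group on {a, b, c} and K = ⟨a, b⟩. For every automorphism χ of F₃ with χ(K) = K and χ(c) ∈ K c^{ε} K (which holds whenever the outer class of χ preserves the conjugacy class of K), there exists a unique automorphism in the outer class of χ of the form: a ↦ χ₀(a), b ↦ χ₀(b), c ↦ g c^{ε}, where χ₀ ∈ Aut(K), g ∈ K, ε ∈ {−1, 1}. -/
namespace Stmt12

section Generic

open FreeGroup

variable {α : Type*} [DecidableEq α]

lemma mul_toWord (i : α) (b : Bool) (z : FreeGroup α) :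
    (FreeGroup.mk [(i,b)] * z).toWord = reduce ((i,b) :: z.toWord) := by
  conv_lhs => rw [← FreeGroup.mk_toWord (x := z), FreeGroup.mul_mk, FreeGroup.toWord_mk]
  rfl

lemma cancel_head {i : α} {b : Bool} {z : FreeGroup α} {tl} (hz : z.toWord = (i, b) :: tl) :
    (FreeGroup.mk [(i, !b)] * z).toWord = tl := by
  rw [mul_toWord, reduce.cons, z.reduce_toWord, hz]
  simp

lemma nocancel_head {i j : α} {s : Bool} {z : FreeGroup α} {tl} (hz : z.toWord = (j, s) :: tl)
    (hij : j ≠ i) (b : Bool) :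
    (FreeGroup.mk [(i, b)] * z).toWord = (i, b) :: z.toWord := by
  rw [mul_toWord, reduce.cons, z.reduce_toWord]
  rw [hz]
  simp [Ne.symm hij, ← hz]

lemma inv_single (i : α) (b : Bool) : (FreeGroup.mk [(i, b)])⁻¹ = FreeGroup.mk [(i, !b)] := by
  rw [FreeGroup.inv_mk]; simp [FreeGroup.invRev]

lemma single_eq_zpow (i : α) (b : Bool) :
    FreeGroup.mk [(i, b)] = FreeGroup.of i ^ (cond b 1 (-1) : ℤ) := by
  cases b with
  | true => simp [FreeGroup.of]
  | false =>
    simp only [cond]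
    rw [zpow_neg, zpow_one,
      show (FreeGroup.of i : FreeGroup α) = FreeGroup.mk [(i, true)] from rfl,
      FreeGroup.inv_mk]
    simp [FreeGroup.invRev]

lemma commute_of_eq_zpow (i : α) (z : FreeGroup α)
    (h : z * FreeGroup.of i = FreeGroup.of i * z) : ∃ m : ℤ, z = FreeGroup.of i ^ m := by
  suffices H : ∀ n, ∀ z : FreeGroup α, z.toWord.length ≤ n →
      z * FreeGroup.of i = FreeGroup.of i * z → ∃ m : ℤ, z = FreeGroup.of i ^ m from
    H _ z le_rfl h
  intro n
  induction n with
  | zero =>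
    intro z hlen _
    refine ⟨0, ?_⟩
    rw [zpow_zero, ← FreeGroup.toWord_eq_nil_iff, List.length_eq_zero_iff.mp (Nat.le_zero.mp hlen)]
  | succ n ih =>
    intro z hlen hcomm
    rcases hzw : z.toWord with _ | ⟨⟨j, s⟩, tl⟩
    · exact ⟨0, by rw [zpow_zero, ← FreeGroup.toWord_eq_nil_iff, hzw]⟩
    by_cases hji : j = i
    · -- head of z is an i-letter: cancel it
      subst hji
      set z' : FreeGroup α := FreeGroup.mk [(j, !s)] * z with hz'
      have htw : z'.toWord = tl := cancel_head hzw
      have hlen' : z'.toWord.length ≤ n := by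
        rw [htw]
        have := hlen; rw [hzw] at this; simpa using Nat.lt_succ_iff.mp this
      have hcomm' : z' * FreeGroup.of j = FreeGroup.of j * z' := by
        rw [hz', mul_assoc, hcomm, ← mul_assoc, ← mul_assoc]
        congr 1
        rw [single_eq_zpow]
        exact ((Commute.refl (FreeGroup.of j)).zpow_left _).eq
      obtain ⟨m, hm⟩ := ih z' hlen' hcomm'
      refine ⟨(cond s 1 (-1) : ℤ) + m, ?_⟩
      have : z = FreeGroup.mk [(j, s)] * z' := by
        rw [hz', ← inv_single, ← mul_assoc, mul_inv_cancel, one_mul]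
      rw [this, hm, single_eq_zpow, ← zpow_add]
    · -- head of z is not an i-letter: look at z⁻¹
      have hz1 : z ≠ 1 := by
        intro h1; rw [h1] at hzw; simp at hzw
      rcases hzw' : z⁻¹.toWord with _ | ⟨⟨k, u⟩, tl'⟩
      · exact absurd (inv_eq_one.mp (FreeGroup.toWord_eq_nil_iff.mp hzw')) hz1
      by_cases hki : k = i
      · -- last letter of z is an i-letter: cancel on z⁻¹
        subst hki
        set z' : FreeGroup α := FreeGroup.mk [(k, !u)] * z⁻¹ with hz'
        have htw : z'.toWord = tl' := cancel_head hzw'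
        have hlen' : z'.toWord.length ≤ n := by
          rw [htw]
          have h2 : z⁻¹.toWord.length ≤ n + 1 := by
            rw [FreeGroup.toWord_inv, FreeGroup.invRev_length]; exact hlen
          rw [hzw'] at h2; simpa using Nat.lt_succ_iff.mp h2
        have hcomminv : z⁻¹ * FreeGroup.of k = FreeGroup.of k * z⁻¹ := by
          have := congrArg (fun t => z⁻¹ * t * z⁻¹) hcomm.symm
          simpa [mul_assoc] using this
        have hcomm' : z' * FreeGroup.of k = FreeGroup.of k * z' := by
          rw [hz', mul_assoc, hcomminv, ← mul_assoc, ← mul_assoc]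
          congr 1
          rw [single_eq_zpow]
          exact ((Commute.refl (FreeGroup.of k)).zpow_left _).eq
        obtain ⟨m, hm⟩ := ih z' hlen' hcomm'
        refine ⟨-((cond u 1 (-1) : ℤ) + m), ?_⟩
        have : z⁻¹ = FreeGroup.mk [(k, u)] * z' := by
          rw [hz', ← inv_single, ← mul_assoc, mul_inv_cancel, one_mul]
        have : z⁻¹ = FreeGroup.of k ^ ((cond u 1 (-1) : ℤ) + m) := by
          rw [this, hm, single_eq_zpow, ← zpow_add]
        rw [← inv_inv z, this, ← zpow_neg]
      · -- neither end is an i-letter: contradiction with commuting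
        exfalso
        have h1 : (FreeGroup.mk [(i, true)] * z).toWord = (i, true) :: z.toWord :=
          nocancel_head hzw hji true
        have h2 : (FreeGroup.mk [(i, false)] * z⁻¹).toWord = (i, false) :: z⁻¹.toWord :=
          nocancel_head hzw' hki false
        have h3 : z * FreeGroup.of i = (FreeGroup.mk [(i, false)] * z⁻¹)⁻¹ := by
          rw [mul_inv_rev, inv_inv, inv_single]
          simp [FreeGroup.of]
        have h4 : (z * FreeGroup.of i).toWord = z.toWord ++ [(i, true)] := by
          rw [h3, FreeGroup.toWord_inv, h2,
            show FreeGroup.invRev ((i, false) :: z⁻¹.toWord)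
              = FreeGroup.invRev (z⁻¹.toWord) ++ [(i, true)] from by simp [FreeGroup.invRev],
            ← FreeGroup.toWord_inv, inv_inv]
        have h5 : (FreeGroup.mk [(i, true)] * z).toWord = (z * FreeGroup.of i).toWord := by
          rw [show FreeGroup.mk [(i, true)] = FreeGroup.of i from rfl, ← hcomm]
        rw [h1, h4, hzw] at h5
        simp at h5
        exact hji h5.1.1.symm

end Generic

abbrev F₃ : Type := FreeGroup (Fin 3)

def a : F₃ := FreeGroup.of 0
def b : F₃ := FreeGroup.of 1
def c : F₃ := FreeGroup.of 2

/-- The free factor `K = ⟨a, b⟩` of `F₃`. -/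
def K : Subgroup F₃ := Subgroup.closure {a, b}

lemma ha : a ∈ K := Subgroup.subset_closure (Set.mem_insert _ _)
lemma hb : b ∈ K := Subgroup.subset_closure (Set.mem_insert_of_mem _ rfl)

/-- The retraction of `F₃` onto `K` killing `c`. -/
def r : F₃ →* F₃ := FreeGroup.lift (fun j => if j = (2 : Fin 3) then 1 else FreeGroup.of j)

lemma r_a : r a = a := by simp [r, a, FreeGroup.lift_apply_of]
lemma r_b : r b = b := by simp [r, b, FreeGroup.lift_apply_of]
lemma r_c : r c = 1 := by simp [r, c, FreeGroup.lift_apply_of]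

lemma r_fix : ∀ k ∈ K, r k = k := by
  intro k hk
  induction hk using Subgroup.closure_induction with
  | mem x hx =>
    rcases hx with h | h
    · rw [h, r_a]
    · rw [Set.mem_singleton_iff.mp h, r_b]
  | one => exact map_one r
  | mul x y _ _ hx hy => rw [_root_.map_mul, hx, hy]
  | inv x _ hx => rw [_root_.map_inv, hx]

lemma r_mem (v : F₃) : r v ∈ K := by
  have : r.range ≤ K := by
    apply FreeGroup.range_lift_le
    rintro y ⟨j, rfl⟩
    by_cases h : j = (2 : Fin 3)
    · simp only [h, if_pos rfl]
      exact one_mem K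
    · simp only [if_neg h]
      fin_cases j
      · exact ha
      · exact hb
      · exact absurd rfl h
  exact this ⟨v, rfl⟩

/-- Exponent-sum homomorphism counting the letter `i`. -/
def expSum (i : Fin 3) : F₃ →* Multiplicative ℤ :=
  FreeGroup.lift (fun j => Multiplicative.ofAdd (if j = i then 1 else 0))

lemma expSum_of (i j : Fin 3) :
    expSum i (FreeGroup.of j) = Multiplicative.ofAdd (if j = i then 1 else 0) := by
  simp [expSum, FreeGroup.lift_apply_of]

lemma expSum_zpow_self (i : Fin 3) (m : ℤ) :
    expSum i (FreeGroup.of i ^ m) = Multiplicative.ofAdd m := by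
  rw [map_zpow, expSum_of, if_pos rfl]
  rw [← ofAdd_zsmul]
  norm_num

lemma expSum_c_K : ∀ k ∈ K, expSum 2 k = 1 := by
  intro k hk
  induction hk using Subgroup.closure_induction with
  | mem x hx =>
    rcases hx with h | h
    · rw [h]; simp [a, expSum_of]
    · rw [Set.mem_singleton_iff.mp h]; simp [b, expSum_of]
  | one => exact map_one _
  | mul x y _ _ hx hy => rw [_root_.map_mul, hx, hy, mul_one]
  | inv x _ hx => rw [_root_.map_inv, hx, inv_one]

/-- An element commuting with both `a` and `b` is trivial. -/
lemma eq_one_of_comm_ab (s : F₃) (hsa : s * a = a * s) (hsb : s * b = b * s) : s = 1 := by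
  obtain ⟨m, hm⟩ := commute_of_eq_zpow (0 : Fin 3) s hsa
  obtain ⟨n, hn⟩ := commute_of_eq_zpow (1 : Fin 3) s hsb
  have h1 : expSum 0 s = Multiplicative.ofAdd m := by rw [hm]; exact expSum_zpow_self 0 m
  have h2 : expSum 0 s = 1 := by
    rw [hn, map_zpow, expSum_of]
    norm_num
  have : m = 0 := by
    have := h1.symm.trans h2
    simpa using this
  rw [hm, this, zpow_zero]

/-- An element of `K` commuting with `c` is trivial. -/
lemma eq_one_of_mem_K_comm_c (v : F₃) (hv : v ∈ K) (hc : v * c = c * v) : v = 1 := by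
  obtain ⟨n, hn⟩ := commute_of_eq_zpow (2 : Fin 3) v hc
  have h1 : expSum 2 v = Multiplicative.ofAdd n := by rw [hn]; exact expSum_zpow_self 2 n
  have h2 := expSum_c_K v hv
  have : n = 0 := by
    have := h1.symm.trans h2
    simpa using this
  rw [hn, this, zpow_zero]

lemma conjK {g : F₃} (hg : g ∈ K) :
    Subgroup.map (MulAut.conj g).toMonoidHom K = K := by
  apply le_antisymm
  · rintro x ⟨y, hy, rfl⟩
    simpa using mul_mem (mul_mem hg hy) (inv_mem hg)
  · intro x hx
    refine ⟨g⁻¹ * x * g, mul_mem (mul_mem (inv_mem hg) hx) hg, ?_⟩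
    simp [mul_assoc]

/-- any automorphism `χ` of `F₃` with `χ K = K` and `χ c ∈ K c^ε K` has a
unique representative of its outer class preserving `K` and sending `c` to `g c^ε`, `g ∈ K`. -/
theorem stmt12 (χ : MulAut F₃) (ε : ℤ) (hε : ε = 1 ∨ ε = -1)
    (hK : Subgroup.map χ.toMonoidHom K = K)
    (hc : ∃ g₁ ∈ K, ∃ g₂ ∈ K, χ c = g₁ * c ^ ε * g₂) :
    ∃! χ' : MulAut F₃,
      (∃ w : F₃, ∀ x : F₃, χ' x = w⁻¹ * χ x * w) ∧
      Subgroup.map χ'.toMonoidHom K = K ∧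
      (∃ g ∈ K, χ' c = g * c ^ ε) := by
  obtain ⟨g₁, hg₁, g₂, hg₂, hcEq⟩ := hc
  set χ' : MulAut F₃ := MulAut.conj g₂ * χ with hχ'def
  have hχ'x : ∀ x, χ' x = g₂ * χ x * g₂⁻¹ := by
    intro x
    simp [hχ'def, MulAut.conj_apply, mul_assoc]
  have hgK : g₂ * g₁ ∈ K := mul_mem hg₂ hg₁
  have hP2 : Subgroup.map χ'.toMonoidHom K = K := by
    have h1 : χ'.toMonoidHom = (MulAut.conj g₂).toMonoidHom.comp χ.toMonoidHom := by
      ext x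
      simp [hχ'x (FreeGroup.of x), MulAut.conj_apply, mul_assoc]
    rw [h1, ← Subgroup.map_map, hK, conjK hg₂]
  have hP3 : χ' c = (g₂ * g₁) * c ^ ε := by
    rw [hχ'x, hcEq]
    group
  refine ⟨χ', ⟨⟨g₂⁻¹, fun x => by rw [hχ'x x]; group⟩, hP2, ⟨g₂ * g₁, hgK, hP3⟩⟩, ?_⟩
  rintro ψ ⟨⟨w'', hw''⟩, hKψ, ⟨g'', hg''K, hcψ⟩⟩
  set v : F₃ := g₂ * w'' with hvdef
  have hv : ∀ x, ψ x = v⁻¹ * χ' x * v := by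
    intro x
    rw [hw'' x, hχ'x x, hvdef]
    group
  -- conjugation by v preserves K pointwise up to conjugation by r v
  have hKv : ∀ k ∈ K, v⁻¹ * k * v ∈ K := by
    intro k hk
    have hk' : k ∈ Subgroup.map χ'.toMonoidHom K := hP2.symm ▸ hk
    obtain ⟨k₀, hk₀, hk₀eq⟩ := hk'
    have hmem : ψ k₀ ∈ K := by
      rw [← hKψ]
      exact ⟨k₀, hk₀, rfl⟩
    rw [hv k₀] at hmem
    have : (χ' k₀ : F₃) = k := hk₀eq
    rwa [this] at hmem
  have hστ : ∀ k ∈ K, v⁻¹ * k * v = (r v)⁻¹ * k * (r v) := by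
    intro k hk
    have h1 : r (v⁻¹ * k * v) = v⁻¹ * k * v := r_fix _ (hKv k hk)
    have h2 : r (v⁻¹ * k * v) = (r v)⁻¹ * k * (r v) := by
      rw [_root_.map_mul, _root_.map_mul, _root_.map_inv, r_fix k hk]
    rw [← h1, h2]
  -- the c-condition forces v to commute with c
  have hE : (v⁻¹ * (g₂ * g₁) * v) * (v⁻¹ * c ^ ε * v) = g'' * c ^ ε := by
    have := hcψ
    rw [hv c, hP3] at this
    rw [← this]
    group
  have hg''eq : g'' = (r v)⁻¹ * (g₂ * g₁) * (r v) := by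
    have h0 : g'' = v⁻¹ * (g₂ * g₁) * (c ^ ε * v * (c ^ ε)⁻¹) := by
      have := hE
      have h1 : g'' = (v⁻¹ * (g₂ * g₁) * v) * (v⁻¹ * c ^ ε * v) * (c ^ ε)⁻¹ := by
        rw [this]; group
      rw [h1]; group
    have h2 := congrArg r h0
    simp only [_root_.map_mul, _root_.map_inv, map_zpow, r_c, one_zpow, one_mul, mul_one,
      inv_one] at h2
    rw [r_fix _ hg''K, r_fix _ hg₂, r_fix _ hg₁] at h2
    simpa [mul_assoc] using h2
  have hcv : v⁻¹ * c ^ ε * v = c ^ ε := by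
    have h1 : (v⁻¹ * (g₂ * g₁) * v) * (v⁻¹ * c ^ ε * v) = (v⁻¹ * (g₂ * g₁) * v) * c ^ ε := by
      rw [hE, hg''eq, hστ _ hgK]
    exact mul_left_cancel h1
  have hcc : v * c = c * v := by
    have hc1 : v⁻¹ * c * v = c := by
      rcases hε with h | h
      · rw [h, zpow_one] at hcv; exact hcv
      · rw [h] at hcv
        have := congrArg Inv.inv hcv
        simp only [zpow_neg, zpow_one, mul_inv_rev, inv_inv] at this ⊢
        rw [← mul_assoc] at this
        exact this
    calc v * c = v * (v⁻¹ * c * v) := by rw [hc1]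
    _ = c * v := by group
  -- s := r v * v⁻¹ commutes with a and b, hence is trivial
  have hcomm_s : ∀ k ∈ K, (r v * v⁻¹) * k = k * (r v * v⁻¹) := by
    intro k hk
    have := hστ k hk
    calc (r v * v⁻¹) * k = r v * (v⁻¹ * k * v) * v⁻¹ * (v * (r v)⁻¹) * (r v * v⁻¹) := by group
    _ = r v * ((r v)⁻¹ * k * r v) * v⁻¹ * (v * (r v)⁻¹) * (r v * v⁻¹) := by rw [this]
    _ = k * (r v * v⁻¹) := by group
  have hs1 : r v * v⁻¹ = 1 :=
    eq_one_of_comm_ab _ (hcomm_s a ha) (hcomm_s b hb)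
  have hvK : v ∈ K := by
    have : v = r v := by
      have := congrArg (· * v) hs1
      simpa [mul_assoc] using this.symm
    rw [this]
    exact r_mem v
  have hv1 : v = 1 := eq_one_of_mem_K_comm_c v hvK hcc
  ext x
  rw [hv x, hv1]
  group

end Stmt12
end

section
/- Let F be a group and φ ∈ Aut(F). For x ∈ F set h = x⁻¹·φ(x). Then φ(h⁻¹)·h⁻¹·x⁻¹·φᵏ(u)·x = φ²(x⁻¹)·φᵏ(u)·x for all u ∈ F and k ∈ ℤ. Consequently φ²(x⁻¹)·φᵏ(u)·x = v has a solution (x, k) if and only if u or φ(u) is twisted φ²-conjugate to v. -/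
private def Rel18 {F : Type*} [Group F] (φ : MulAut F) (p q : F) : Prop :=
  ∃ w : F, q = (φ ^ 2) w * p * w⁻¹

private lemma rel18_refl {F : Type*} [Group F] (φ : MulAut F) (p : F) : Rel18 φ p p :=
  ⟨1, by simp⟩

private lemma rel18_symm {F : Type*} [Group F] {φ : MulAut F} {p q : F}
    (h : Rel18 φ p q) : Rel18 φ q p := by
  obtain ⟨w, rfl⟩ := h
  exact ⟨w⁻¹, by simp [map_inv]; group⟩

private lemma rel18_trans {F : Type*} [Group F] {φ : MulAut F} {p q r : F}
    (h1 : Rel18 φ p q) (h2 : Rel18 φ q r) : Rel18 φ p r := by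
  obtain ⟨w, rfl⟩ := h1
  obtain ⟨w', rfl⟩ := h2
  exact ⟨w' * w, by simp [map_mul]; group⟩

private lemma rel18_sq {F : Type*} [Group F] (φ : MulAut F) (p : F) :
    Rel18 φ p ((φ ^ 2) p) := ⟨p, by group⟩

private lemma zpow2 {F : Type*} [Group F] (φ : MulAut F) (p : F) :
    (φ ^ (2 : ℤ)) p = (φ ^ 2) p := by
  norm_cast

private lemma rel18_even {F : Type*} [Group F] (φ : MulAut F) (u : F) :
    ∀ m : ℤ, Rel18 φ u ((φ ^ (2 * m)) u) := by
  intro m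
  induction m using Int.induction_on with
  | zero => simpa using rel18_refl φ u
  | succ i ih =>
      have key : (φ ^ (2 * (i + 1) : ℤ)) u = (φ ^ 2) ((φ ^ (2 * (i : ℤ))) u) := by
        rw [← zpow2]
        rw [← MulAut.mul_apply, ← zpow_add]
        ring_nf
      rw [key]
      exact rel18_trans ih (rel18_sq φ _)
  | pred i ih =>
      have key : (φ ^ (2 * (-i : ℤ))) u = (φ ^ 2) ((φ ^ (2 * (-i - 1) : ℤ)) u) := by
        rw [← zpow2, ← MulAut.mul_apply, ← zpow_add]
        ring_nf
      rw [key] at ih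
      exact rel18_trans ih (rel18_symm (rel18_sq φ _))

/-- with `h = x⁻¹ · φ x` one has
`φ (h⁻¹) · h⁻¹ · x⁻¹ · φᵏ u · x = φ² (x⁻¹) · φᵏ u · x`; consequently
`φ² (x⁻¹) · φᵏ u · x = v` has a solution `(x, k)` iff `u` or `φ u` is twisted `φ²`-conjugate
to `v`. -/
theorem stmt18 {F : Type*} [Group F] (φ : MulAut F) :
    (∀ (x u : F) (k : ℤ),
      φ ((x⁻¹ * φ x)⁻¹) * (x⁻¹ * φ x)⁻¹ * x⁻¹ * (φ ^ k) u * x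
        = (φ ^ 2) (x⁻¹) * (φ ^ k) u * x) ∧
    (∀ u v : F,
      (∃ (x : F) (k : ℤ), (φ ^ 2) (x⁻¹) * (φ ^ k) u * x = v) ↔
      ((∃ w : F, v = (φ ^ 2) w * u * w⁻¹) ∨ (∃ w : F, v = (φ ^ 2) w * (φ u) * w⁻¹))) := by
  constructor
  · intro x u k
    simp only [mul_inv_rev, map_mul, map_inv, inv_inv, pow_two, MulAut.mul_apply]
    group
  · intro u v
    constructor
    · rintro ⟨x, k, rfl⟩
      have hxv : Rel18 φ ((φ ^ k) u) ((φ ^ 2) x⁻¹ * (φ ^ k) u * x) :=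
        ⟨x⁻¹, by rw [inv_inv]⟩
      rcases Int.even_or_odd k with ⟨m, hm⟩ | ⟨m, hm⟩
      · left
        have : Rel18 φ u ((φ ^ k) u) := by
          rw [hm, ← two_mul]; exact rel18_even φ u m
        exact rel18_trans this hxv
      · right
        have hk : (φ ^ k) u = (φ ^ (2 * m)) (φ u) := by
          rw [hm, zpow_add, MulAut.mul_apply, zpow_one]
        have : Rel18 φ (φ u) ((φ ^ k) u) := by
          rw [hk]; exact rel18_even φ (φ u) m
        exact rel18_trans this hxv
    · rintro (⟨w, rfl⟩ | ⟨w, rfl⟩)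
      · exact ⟨w⁻¹, 0, by simp⟩
      · exact ⟨w⁻¹, 1, by simp [zpow_one]⟩
end
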